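/- Let γ > 0, λ > 0 and τ ∈ ℝ^{d×d}_s. Define v := (1/λ)·max{0, 1 − γ/|τ^D|}·τ^D when τ^D ≠ 0, and v := 0 when τ^D = 0. Then the point q := τ − λv satisfies q ∈ K and v : (σ − q) ≤ 0 for all σ ∈ K; moreover v is the unique element of ℝ^{d×d}_s with these two properties. (Hence v is the value at τ of the Yosida approximation with parameter λ of the convex subdifferential of the indicator function of K.) -/

import Mathlib

open scoped Classical

/-- The Frobenius inner product `σ : τ = trace (σ τ)` on (symmetric) matrices. -/
noncomputable def frob {d : ℕ} (A B : Matrix (Fin d) (Fin d) ℝ) : ℝ :=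
  Matrix.trace (A * B)

/-- The norm induced by the Frobenius inner product (on symmetric matrices). -/
noncomputable def fnorm {d : ℕ} (A : Matrix (Fin d) (Fin d) ℝ) : ℝ :=
  Real.sqrt (frob A A)

/-- The deviator `τ^D = τ - (trace τ / d) • I`. -/
noncomputable def dev {d : ℕ} (A : Matrix (Fin d) (Fin d) ℝ) : Matrix (Fin d) (Fin d) ℝ :=
  A - (Matrix.trace A / (d : ℝ)) • (1 : Matrix (Fin d) (Fin d) ℝ)

/-- The smoothed max function `max_s`. -/
noncomputable def maxs (s r : ℝ) : ℝ :=
  if s ≤ |r| then max 0 r else (r + s) ^ 2 / (4 * s)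

/-- The smoothed von Mises resolvent `R_s`. -/
noncomputable def Rs {d : ℕ} (s γ : ℝ) (τ : Matrix (Fin d) (Fin d) ℝ) :
    Matrix (Fin d) (Fin d) ℝ :=
  if dev τ = 0 then τ else τ - maxs s (1 - γ / fnorm (dev τ)) • dev τ

/-- The value at `τ` of the Yosida approximation (parameter `λ`) of the convex
subdifferential of the indicator function of the von Mises set `K`. -/
noncomputable def yosidaV {d : ℕ} (γ lam : ℝ) (τ : Matrix (Fin d) (Fin d) ℝ) :
    Matrix (Fin d) (Fin d) ℝ :=
  if dev τ = 0 then 0 else (1 / lam) • (max 0 (1 - γ / fnorm (dev τ)) • dev τ)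

variable {d : ℕ}

lemma frob_eq_sum (A B : Matrix (Fin d) (Fin d) ℝ) (hB : B.IsSymm) :
    frob A B = ∑ i, ∑ j, A i j * B i j := by
  unfold frob Matrix.trace
  simp only [Matrix.diag_apply, Matrix.mul_apply]
  exact Finset.sum_congr rfl fun i _ => Finset.sum_congr rfl fun j _ => by rw [hB.apply]

lemma frob_comm (A B : Matrix (Fin d) (Fin d) ℝ) : frob A B = frob B A :=
  Matrix.trace_mul_comm A B

lemma frob_smul_left (c : ℝ) (A B : Matrix (Fin d) (Fin d) ℝ) :
    frob (c • A) B = c * frob A B := by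
  simp [frob, Matrix.smul_mul]

lemma frob_smul_right (c : ℝ) (A B : Matrix (Fin d) (Fin d) ℝ) :
    frob A (c • B) = c * frob A B := by
  simp [frob, Matrix.mul_smul]

lemma frob_sub_right (A B C : Matrix (Fin d) (Fin d) ℝ) :
    frob A (B - C) = frob A B - frob A C := by
  simp [frob, Matrix.mul_sub]

lemma frob_sub_left (A B C : Matrix (Fin d) (Fin d) ℝ) :
    frob (A - B) C = frob A C - frob B C := by
  simp [frob, Matrix.sub_mul]

lemma frob_add_right (A B C : Matrix (Fin d) (Fin d) ℝ) :
    frob A (B + C) = frob A B + frob A C := by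
  simp [frob, Matrix.mul_add]

lemma frob_one_right (A : Matrix (Fin d) (Fin d) ℝ) : frob A 1 = Matrix.trace A := by
  simp [frob]

lemma frob_zero_left (B : Matrix (Fin d) (Fin d) ℝ) : frob 0 B = 0 := by simp [frob]

lemma frob_self_nonneg (A : Matrix (Fin d) (Fin d) ℝ) (hA : A.IsSymm) : 0 ≤ frob A A := by
  rw [frob_eq_sum A A hA]
  exact Finset.sum_nonneg fun i _ => Finset.sum_nonneg fun j _ => mul_self_nonneg _

lemma frob_self_eq_zero {A : Matrix (Fin d) (Fin d) ℝ} (hA : A.IsSymm)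
    (h : frob A A ≤ 0) : A = 0 := by
  have h0 : frob A A = 0 := le_antisymm h (frob_self_nonneg A hA)
  rw [frob_eq_sum A A hA] at h0
  ext i j
  have h1 : ∀ i ∈ Finset.univ, (0:ℝ) ≤ ∑ j, A i j * A i j :=
    fun i _ => Finset.sum_nonneg fun j _ => mul_self_nonneg _
  have h2 := (Finset.sum_eq_zero_iff_of_nonneg h1).1 h0 i (Finset.mem_univ i)
  have h3 := (Finset.sum_eq_zero_iff_of_nonneg
    (fun j _ => mul_self_nonneg (A i j))).1 h2 j (Finset.mem_univ j)
  have := mul_self_eq_zero.mp h3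
  simpa using this

lemma fnorm_sq (A : Matrix (Fin d) (Fin d) ℝ) (hA : A.IsSymm) :
    fnorm A ^ 2 = frob A A := Real.sq_sqrt (frob_self_nonneg A hA)

lemma fnorm_zero : fnorm (0 : Matrix (Fin d) (Fin d) ℝ) = 0 := by
  simp [fnorm, frob]

lemma fnorm_smul (c : ℝ) (A : Matrix (Fin d) (Fin d) ℝ) :
    fnorm (c • A) = |c| * fnorm A := by
  unfold fnorm
  rw [frob_smul_left, frob_smul_right, ← mul_assoc, ← sq,
    Real.sqrt_mul (sq_nonneg c), Real.sqrt_sq_eq_abs]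

lemma frob_le (A B : Matrix (Fin d) (Fin d) ℝ) (hA : A.IsSymm) (hB : B.IsSymm) :
    frob A B ≤ fnorm A * fnorm B := by
  have key : (frob A B) ^ 2 ≤ frob A A * frob B B := by
    rw [frob_eq_sum A B hB, frob_eq_sum A A hA, frob_eq_sum B B hB]
    simpa [← Finset.sum_product', sq] using
      Finset.sum_mul_sq_le_sq_mul_sq (Finset.univ : Finset (Fin d × Fin d))
        (fun p => A p.1 p.2) (fun p => B p.1 p.2)
  calc frob A B ≤ |frob A B| := le_abs_self _
    _ = Real.sqrt ((frob A B) ^ 2) := (Real.sqrt_sq_eq_abs _).symm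
    _ ≤ Real.sqrt (frob A A * frob B B) := Real.sqrt_le_sqrt key
    _ = fnorm A * fnorm B := by
        rw [Real.sqrt_mul (frob_self_nonneg A hA)]; rfl

lemma trace_dev (hd : 0 < d) (A : Matrix (Fin d) (Fin d) ℝ) : Matrix.trace (dev A) = 0 := by
  have : (d : ℝ) ≠ 0 := Nat.cast_ne_zero.mpr hd.ne'
  simp [dev, Matrix.trace_sub, Matrix.trace_smul, Matrix.trace_one, smul_eq_mul,
    div_mul_cancel₀ _ this]

lemma dev_dev (hd : 0 < d) (A : Matrix (Fin d) (Fin d) ℝ) : dev (dev A) = dev A := by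
  rw [dev, trace_dev hd]
  simp

lemma dev_sub (A B : Matrix (Fin d) (Fin d) ℝ) : dev (A - B) = dev A - dev B := by
  simp only [dev, Matrix.trace_sub, sub_div, sub_smul]
  abel

lemma dev_smul (c : ℝ) (A : Matrix (Fin d) (Fin d) ℝ) : dev (c • A) = c • dev A := by
  simp only [dev, Matrix.trace_smul, smul_eq_mul, mul_div_assoc, smul_sub, smul_smul]

lemma dev_isSymm {A : Matrix (Fin d) (Fin d) ℝ} (hA : A.IsSymm) : (dev A).IsSymm :=
  hA.sub (Matrix.isSymm_one.smul _)

lemma frob_dev_right (hd : 0 < d) (A σ : Matrix (Fin d) (Fin d) ℝ)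
    (hA : Matrix.trace (dev A) = 0) : frob (dev A) σ = frob (dev A) (dev σ) := by
  have : σ = dev σ + (Matrix.trace σ / (d : ℝ)) • (1 : Matrix (Fin d) (Fin d) ℝ) := by
    simp [dev]
  conv_lhs => rw [this]
  rw [frob_add_right, frob_smul_right, frob_one_right, hA]
  ring

lemma frob_neg_right {d : ℕ} (A B : Matrix (Fin d) (Fin d) ℝ) :
    frob A (-B) = - frob A B := by
  simp [frob, Matrix.mul_neg]


/-- Let `γ > 0`, `λ > 0` and `τ ∈ ℝ^{d×d}_s`.  With
`v := (1/λ)·max{0, 1 - γ/|τ^D|}·τ^D` (and `v := 0` if `τ^D = 0`), the point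
`q := τ - λ•v` satisfies `q ∈ K` and `v : (σ - q) ≤ 0` for all `σ ∈ K`,
where `K = {σ ∈ ℝ^{d×d}_s : |σ^D| ≤ γ}`; moreover `v` is the unique element of
`ℝ^{d×d}_s` with these two properties. -/
theorem yosida_approximation_of_vonMises_subdifferential
    (d : ℕ) (hd : 0 < d) (γ lam : ℝ) (hγ : 0 < γ) (hlam : 0 < lam)
    (τ : Matrix (Fin d) (Fin d) ℝ) (hτ : τ.IsSymm) :
    ((τ - lam • yosidaV γ lam τ).IsSymm ∧
      fnorm (dev (τ - lam • yosidaV γ lam τ)) ≤ γ) ∧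
    (∀ σ : Matrix (Fin d) (Fin d) ℝ, σ.IsSymm → fnorm (dev σ) ≤ γ →
      frob (yosidaV γ lam τ) (σ - (τ - lam • yosidaV γ lam τ)) ≤ 0) ∧
    (∀ w : Matrix (Fin d) (Fin d) ℝ, w.IsSymm →
      ((τ - lam • w).IsSymm ∧ fnorm (dev (τ - lam • w)) ≤ γ) →
      (∀ σ : Matrix (Fin d) (Fin d) ℝ, σ.IsSymm → fnorm (dev σ) ≤ γ →
        frob w (σ - (τ - lam • w)) ≤ 0) →
      w = yosidaV γ lam τ) := by
  set v := yosidaV γ lam τ with hv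
  have hdevsymm : (dev τ).IsSymm := dev_isSymm hτ
  have hvsymm : v.IsSymm := by
    rw [hv]; unfold yosidaV
    split
    · exact Matrix.isSymm_zero
    · exact (hdevsymm.smul _).smul _
  have h12 : ((τ - lam • v).IsSymm ∧ fnorm (dev (τ - lam • v)) ≤ γ) ∧
      (∀ σ : Matrix (Fin d) (Fin d) ℝ, σ.IsSymm → fnorm (dev σ) ≤ γ →
        frob v (σ - (τ - lam • v)) ≤ 0) := by
    by_cases hdev : dev τ = 0
    · have hv0 : v = 0 := by rw [hv]; unfold yosidaV; simp [hdev]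
      rw [hv0]
      refine ⟨⟨by simpa using hτ, ?_⟩, fun σ _ _ => by rw [frob_zero_left]⟩
      simp only [smul_zero, sub_zero]
      rw [hdev, fnorm_zero]; exact hγ.le
    · set t := fnorm (dev τ) with ht
      have htnn : 0 ≤ t := Real.sqrt_nonneg _
      have htpos : 0 < t := by
        rcases htnn.lt_or_eq with h | h
        · exact h
        · exfalso
          apply hdev
          apply frob_self_eq_zero hdevsymm
          have := fnorm_sq (dev τ) hdevsymm
          rw [← ht, ← h] at this
          simp at this
          rw [← this]
      by_cases hle : t ≤ γ
      · have hm0 : max 0 (1 - γ / t) = 0 := by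
          apply max_eq_left
          have : (1:ℝ) ≤ γ / t := (one_le_div htpos).mpr hle
          linarith
        have hv0 : v = 0 := by
          rw [hv]; unfold yosidaV; simp [hdev, ← ht, hm0]
        rw [hv0]
        refine ⟨⟨by simpa using hτ, ?_⟩, fun σ _ _ => by rw [frob_zero_left]⟩
        simpa using hle
      · push_neg at hle
        have hmnn : (0:ℝ) ≤ 1 - γ / t := by
          have : γ / t ≤ 1 := (div_le_one htpos).mpr hle.le
          linarith
        have hm : max 0 (1 - γ / t) = 1 - γ / t := max_eq_right hmnn
        set m : ℝ := 1 - γ / t with hmdef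
        have hlamv : lam • v = m • dev τ := by
          rw [hv]; unfold yosidaV
          simp only [hdev, if_neg, ← ht, hm, ite_false]
          rw [smul_smul, smul_smul, mul_one_div_cancel hlam.ne', one_mul]
          rw [← hmdef, hm]
        have hdevq : dev (τ - lam • v) = (γ / t) • dev τ := by
          rw [hlamv, dev_sub, dev_smul, dev_dev hd, hmdef]
          module
        constructor
        · constructor
          · exact hτ.sub (hvsymm.smul lam)
          · rw [hdevq, fnorm_smul, ← ht, abs_of_pos (div_pos hγ htpos),
              div_mul_cancel₀ γ htpos.ne']
        · intro σ hσs hσK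
          have hvval : v = ((1 / lam) * m) • dev τ := by
            rw [hv]; unfold yosidaV
            simp only [hdev, if_neg, ← ht, hm, ite_false]
            rw [smul_smul]
            rw [← hmdef, hm]
          have htr : Matrix.trace (dev τ) = 0 := trace_dev hd τ
          have key : frob (dev τ) (σ - (τ - lam • v)) ≤ 0 := by
            rw [frob_sub_right, frob_dev_right hd τ σ htr,
              frob_dev_right hd τ (τ - lam • v) htr, hdevq, frob_smul_right]
            have h1 : frob (dev τ) (dev σ) ≤ t * γ := by
              calc frob (dev τ) (dev σ) ≤ fnorm (dev τ) * fnorm (dev σ) :=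
                    frob_le _ _ hdevsymm (dev_isSymm hσs)
                _ ≤ t * γ := by
                    rw [← ht]
                    exact mul_le_mul_of_nonneg_left hσK htnn
            have h2 : frob (dev τ) (dev τ) = t ^ 2 := by
              rw [ht, fnorm_sq (dev τ) hdevsymm]
            rw [h2]
            have : γ / t * t ^ 2 = γ * t := by
              field_simp
            rw [this]
            nlinarith
          have expand : frob v (σ - (τ - lam • v)) =
              (1 / lam * m) * frob (dev τ) (σ - (τ - lam • v)) := by
            nth_rewrite 1 [hvval]
            rw [frob_smul_left]
          rw [expand]
          exact mul_nonpos_of_nonneg_of_nonpos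
            (mul_nonneg (by positivity) hmnn) key
  refine ⟨h12.1, h12.2, ?_⟩
  intro w hwsymm hqw hwvar
  have A1 := h12.2 (τ - lam • w) hqw.1 hqw.2
  have A2 := hwvar (τ - lam • v) h12.1.1 h12.1.2
  have e1 : (τ - lam • w) - (τ - lam • v) = lam • (v - w) := by
    rw [smul_sub]; abel
  have e2 : (τ - lam • v) - (τ - lam • w) = -(lam • (v - w)) := by
    rw [smul_sub]; abel
  rw [e1] at A1
  rw [e2, frob_neg_right] at A2
  have hsum : frob (v - w) (lam • (v - w)) ≤ 0 := by
    rw [frob_sub_left]; linarith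
  rw [frob_smul_right] at hsum
  have hnn : 0 ≤ frob (v - w) (v - w) := frob_self_nonneg _ (hvsymm.sub hwsymm)
  have hz : frob (v - w) (v - w) ≤ 0 := by nlinarith
  have := frob_self_eq_zero (hvsymm.sub hwsymm) hz
  have := sub_eq_zero.mp this
  exact this.symm
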